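/- Let 1 < r < ∞, 0 < α < 1, and let λ : ℝ → ℝ be the even function with λ(x) = (2-x)^α for 0 ≤ x ≤ 2 and λ(x) = 0 for x > 2. Then λ is absolutely continuous on [0,∞), λ(ξ) → 0 as |ξ| → ∞, the quantity sup_{ξ} |ξ|^{1/r+1}|λ'(ξ)| is infinite, but sup_{k∈ℤ} 2^{k/r} ∫_{Δ_k} |λ'(ξ)| dξ < ∞, where Δ_k = (-2^{k+1},-2^k] ∪ [2^k,2^{k+1}). -/

import Mathlib

open MeasureTheory Set Filter

/-- Absolute continuity of `f` on a set `s ⊆ ℝ` (ε–δ definition with finitely many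
non-overlapping subintervals with endpoints in `s`). -/
def ACOn (f : ℝ → ℝ) (s : Set ℝ) : Prop :=
  ∀ ε > (0 : ℝ), ∃ δ > (0 : ℝ), ∀ n : ℕ, ∀ a b : ℕ → ℝ,
    (∀ i < n, a i ∈ s ∧ b i ∈ s ∧ a i ≤ b i) →
    (∀ i < n, ∀ j < n, i ≠ j → Disjoint (Ioo (a i) (b i)) (Ioo (a j) (b j))) →
    (∑ i ∈ Finset.range n, (b i - a i)) < δ →
    (∑ i ∈ Finset.range n, |f (b i) - f (a i)|) < ε

/-- The dyadic annulus `Δ_k = (-2^{k+1}, -2^k] ∪ [2^k, 2^{k+1})`. -/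
def DyadicAnnulus (k : ℤ) : Set ℝ :=
  Ioc (-(2 : ℝ) ^ (k + 1)) (-(2 : ℝ) ^ k) ∪ Ico ((2 : ℝ) ^ k) ((2 : ℝ) ^ (k + 1))

-- Auxiliary definitions and lemmas

noncomputable def Dfun (α : ℝ) : ℝ → ℝ :=
  Set.indicator (Ioo 0 2) (fun x => -(α * (2 - x) ^ (α - 1)))

lemma Dfun_of_not_mem {α x : ℝ} (hx : x ∉ Ioo (0:ℝ) 2) : Dfun α x = 0 :=
  Set.indicator_of_notMem hx _

lemma Dfun_of_mem {α x : ℝ} (hx : x ∈ Ioo (0:ℝ) 2) :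
    Dfun α x = -(α * (2 - x) ^ (α - 1)) := Set.indicator_of_mem hx _

lemma integrableD {α : ℝ} (hα1 : α < 1) (hα0 : 0 < α) : Integrable (Dfun α) volume := by
  have g0 : IntervalIntegrable (fun x : ℝ => x ^ (α - 1)) volume 0 2 :=
    intervalIntegral.intervalIntegrable_rpow' (by linarith)
  have g1 : IntervalIntegrable (fun x : ℝ => (2 - x) ^ (α - 1)) volume (2 - 0) (2 - 2) :=
    g0.comp_sub_left 2
  have g2 : IntervalIntegrable (fun x : ℝ => -(α * (2 - x) ^ (α - 1))) volume 0 2 := by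
    have h := (g1.symm.const_mul α).neg
    simp only [sub_zero, sub_self] at h
    exact h
  have g3 : IntegrableOn (fun x : ℝ => -(α * (2 - x) ^ (α - 1))) (Ioo 0 2) volume :=
    (intervalIntegrable_iff_integrableOn_Ioo_of_le (by norm_num)).mp g2
  exact g3.integrable_indicator measurableSet_Ioo

section lamsec
variable {α : ℝ} (hα0 : 0 < α) (hα1 : α < 1) {lam : ℝ → ℝ}
  (hval : ∀ x : ℝ, 0 ≤ x → x ≤ 2 → lam x = (2 - x) ^ α)
  (hzero : ∀ x : ℝ, 2 < x → lam x = 0)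

include hα0 hval in
lemma lam_two : lam 2 = 0 := by
  rw [hval 2 (by norm_num) le_rfl]
  simp [Real.zero_rpow hα0.ne']

include hval in
lemma lam_hasDerivAt : ∀ ξ ∈ Ioo (0:ℝ) 2, HasDerivAt lam (Dfun α ξ) ξ := by
  intro ξ hξ
  have h1 : HasDerivAt (fun x : ℝ => 2 - x) (-1) ξ := (hasDerivAt_id ξ).const_sub 2
  have h2 : (2 : ℝ) - ξ ≠ 0 := by have := hξ.2; intro h; linarith [sub_eq_zero.mp h]
  have h3 : HasDerivAt (fun x : ℝ => (2 - x) ^ α) (-1 * α * (2 - ξ) ^ (α - 1)) ξ :=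
    h1.rpow_const (Or.inl h2)
  have heq : (fun x : ℝ => (2 - x) ^ α) =ᶠ[nhds ξ] lam := by
    filter_upwards [isOpen_Ioo.mem_nhds hξ] with x hx
    exact (hval x hx.1.le hx.2.le).symm
  have := h3.congr_of_eventuallyEq heq.symm
  rw [Dfun_of_mem hξ]
  exact this.congr_deriv (by ring)

include hα0 hval hzero in
lemma lam_contOn : ContinuousOn lam (Ici 0) := by
  have hc : Continuous fun x : ℝ => (max (2 - x) 0) ^ α :=
    ((continuous_const.sub continuous_id).max continuous_const).rpow_const
      (fun x => Or.inr hα0.le)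
  apply hc.continuousOn.congr
  intro x hx
  rcases le_or_gt x 2 with h | h
  · rw [hval x hx h]
    simp only [sup_eq_left.mpr (by linarith : (0:ℝ) ≤ 2 - x)]
  · rw [hzero x h]
    simp only [sup_eq_right.mpr (by linarith : 2 - x ≤ (0:ℝ)), Real.zero_rpow hα0.ne']

include hα0 hα1 hval hzero in
lemma lam_ftc : ∀ a b : ℝ, 0 ≤ a → a ≤ b → lam b - lam a = ∫ x in a..b, Dfun α x := by
  intro a b ha hab
  refine (intervalIntegral.integral_eq_sub_of_hasDeriv_right_of_le hab
    ((lam_contOn hα0 hval hzero).mono ?_) ?_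
    ((integrableD hα1 hα0).intervalIntegrable)).symm
  · exact fun x hx => le_trans ha hx.1
  · intro x hx
    have hx0 : 0 < x := lt_of_le_of_lt ha hx.1
    rcases lt_or_ge x 2 with h2 | h2
    · exact (lam_hasDerivAt hval (lam := lam) x ⟨hx0, h2⟩).hasDerivWithinAt
    · have hD : Dfun α x = 0 := Dfun_of_not_mem (by simp [h2, not_lt.mpr])
      rw [hD]
      have hlamx : lam x = 0 := by
        rcases eq_or_lt_of_le h2 with h | h
        · rw [← h]; exact lam_two hα0 hval
        · exact hzero x h
      exact (hasDerivWithinAt_const x _ 0).congr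
        (fun y hy => hzero y (lt_of_le_of_lt h2 hy)) hlamx

end lamsec

lemma lam_deriv_zero {lam : ℝ → ℝ} (hzero : ∀ x : ℝ, 2 < x → lam x = 0)
    {ξ : ℝ} (hξ : 2 < ξ) : deriv lam ξ = 0 := by
  have h : lam =ᶠ[nhds ξ] fun _ => (0:ℝ) := by
    filter_upwards [isOpen_Ioi.mem_nhds hξ] with y hy using hzero y hy
  rw [h.deriv_eq, deriv_const]

lemma lam_deriv_neg {lam : ℝ → ℝ} (heven : ∀ x : ℝ, lam (-x) = lam x) (ξ : ℝ) :
    deriv lam ξ = -deriv lam (-ξ) := by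
  have h : (fun x => lam (-x)) = lam := funext heven
  conv_lhs => rw [← h]
  rw [deriv_comp_neg]

/-- the even function `λ(x) = (2-x)^α` on `[0,2]`, `0` for `x > 2`
(with `0 < α < 1`) is absolutely continuous on `[0,∞)`, tends to `0` at infinity, fails
the pointwise Lizorkin condition `sup |ξ|^{1/r+1}|λ'(ξ)| < ∞`, yet satisfies the dyadic
condition `sup_k 2^{k/r} ∫_{Δ_k} |λ'| < ∞`. -/
theorem example_lizorkin_fails_dyadic_holds (r α : ℝ) (hr : 1 < r)
    (hα0 : 0 < α) (hα1 : α < 1) (lam : ℝ → ℝ)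
    (heven : ∀ x : ℝ, lam (-x) = lam x)
    (hval : ∀ x : ℝ, 0 ≤ x → x ≤ 2 → lam x = (2 - x) ^ α)
    (hzero : ∀ x : ℝ, 2 < x → lam x = 0) :
    ACOn lam (Ici 0) ∧
      Tendsto lam (cocompact ℝ) (nhds 0) ∧
      (¬ ∃ B : ℝ, ∀ ξ ∈ Ioo (0 : ℝ) 2, |ξ| ^ (1 / r + 1) * |deriv lam ξ| ≤ B) ∧
      ∃ A : ℝ, ∀ k : ℤ, (2 : ℝ) ^ ((k : ℝ) / r) * ∫ ξ in DyadicAnnulus k, |deriv lam ξ| ≤ A := by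
  have hr0 : (0:ℝ) < r := lt_trans one_pos hr
  have hInt : Integrable (Dfun α) volume := integrableD hα1 hα0
  refine ⟨?_, ?_, ?_, ?_⟩
  -- Part 1 : absolute continuity
  · intro ε hε
    have hL : (∫⁻ x, ‖Dfun α x‖₊ ∂volume) ≠ ⊤ := hInt.2.ne
    obtain ⟨δ', hδ'0, hδ'⟩ := exists_pos_setLIntegral_lt_of_measure_lt hL
      (ε := ENNReal.ofReal ε) (ENNReal.ofReal_pos.2 hε).ne'
    have hmne : min 1 δ' ≠ ⊤ := ((min_le_left _ _).trans_lt ENNReal.one_lt_top).ne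
    refine ⟨(min 1 δ').toReal, ENNReal.toReal_pos (lt_min one_pos hδ'0).ne' hmne, ?_⟩
    intro n a b hab hdisj hsum
    have key : ∀ i ∈ Finset.range n,
        |lam (b i) - lam (a i)| ≤ ∫ x in Ioo (a i) (b i), ‖Dfun α x‖ := by
      intro i hi
      obtain ⟨ha, hb, hle⟩ := hab i (Finset.mem_range.mp hi)
      rw [lam_ftc hα0 hα1 hval hzero (a i) (b i) ha hle]
      calc |∫ x in (a i)..(b i), Dfun α x| ≤ ∫ x in (a i)..(b i), |Dfun α x| :=
        intervalIntegral.abs_integral_le_integral_abs hle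
      _ = ∫ x in Ioo (a i) (b i), ‖Dfun α x‖ := by
        rw [intervalIntegral.integral_of_le hle, integral_Ioc_eq_integral_Ioo]
        simp [Real.norm_eq_abs]
    have hdisj' : Set.PairwiseDisjoint ↑(Finset.range n) (fun i => Ioo (a i) (b i)) := by
      intro i hi j hj hij
      exact hdisj i (Finset.mem_range.mp hi) j (Finset.mem_range.mp hj) hij
    have hmeas : volume (⋃ i ∈ Finset.range n, Ioo (a i) (b i)) < δ' := by
      calc volume (⋃ i ∈ Finset.range n, Ioo (a i) (b i))
          ≤ ∑ i ∈ Finset.range n, volume (Ioo (a i) (b i)) := measure_biUnion_finset_le _ _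
        _ = ENNReal.ofReal (∑ i ∈ Finset.range n, (b i - a i)) := by
            rw [ENNReal.ofReal_sum_of_nonneg
              (fun i hi => sub_nonneg.2 (hab i (Finset.mem_range.mp hi)).2.2)]
            simp [Real.volume_Ioo]
        _ < min 1 δ' := by
            rw [← ENNReal.ofReal_toReal hmne]
            exact (ENNReal.ofReal_lt_ofReal_iff_of_nonneg
              (Finset.sum_nonneg fun i hi =>
                sub_nonneg.2 (hab i (Finset.mem_range.mp hi)).2.2)).mpr hsum
        _ ≤ δ' := min_le_right _ _
    have hsum2 : (∑ i ∈ Finset.range n, ∫ x in Ioo (a i) (b i), ‖Dfun α x‖) < ε := by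
      rw [← ENNReal.ofReal_lt_ofReal_iff hε,
        ENNReal.ofReal_sum_of_nonneg (fun i _ => integral_nonneg fun x => norm_nonneg _)]
      have heq : ∀ i ∈ Finset.range n,
          ENNReal.ofReal (∫ x in Ioo (a i) (b i), ‖Dfun α x‖)
            = ∫⁻ x in Ioo (a i) (b i), ‖Dfun α x‖₊ := fun i _ =>
        ofReal_integral_norm_eq_lintegral_enorm hInt.integrableOn
      rw [Finset.sum_congr rfl heq,
        ← lintegral_biUnion_finset hdisj' (fun i _ => measurableSet_Ioo)]
      exact hδ' _ hmeas
    calc (∑ i ∈ Finset.range n, |lam (b i) - lam (a i)|)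
        ≤ ∑ i ∈ Finset.range n, ∫ x in Ioo (a i) (b i), ‖Dfun α x‖ :=
          Finset.sum_le_sum key
      _ < ε := hsum2
  -- Part 2 : decay at infinity
  · have h0 : ∀ x : ℝ, 2 < |x| → lam x = 0 := by
      intro x hx
      rcases le_or_gt 0 x with h | h
      · exact hzero x (by rwa [abs_of_nonneg h] at hx)
      · have : lam x = lam (-x) := by rw [← heven (-x), neg_neg]
        rw [this]
        exact hzero (-x) (by rwa [abs_of_neg h] at hx)
    have hEq : lam =ᶠ[cocompact ℝ] fun _ => (0:ℝ) := by
      filter_upwards [(isCompact_Icc (a := (-2:ℝ)) (b := 2)).compl_mem_cocompact] with x hx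
      apply h0
      simp only [Set.mem_compl_iff, Set.mem_Icc, not_and_or, not_le] at hx
      rcases hx with h | h
      · exact lt_abs.mpr (Or.inr (by linarith))
      · exact lt_abs.mpr (Or.inl h)
    exact Tendsto.congr' hEq.symm tendsto_const_nhds
  -- Part 3 : pointwise Lizorkin condition fails
  · rintro ⟨B, hB⟩
    set c : ℝ := α / (|B| + 1) with hc
    have hB1 : (0:ℝ) < |B| + 1 := by positivity
    have hc0 : 0 < c := div_pos hα0 hB1
    have hc1 : c < 1 := (div_lt_one hB1).2 (by linarith [abs_nonneg B])
    set t : ℝ := c ^ (1 - α)⁻¹ with ht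
    have ht0 : 0 < t := Real.rpow_pos_of_pos hc0 _
    have ht1 : t < 1 := Real.rpow_lt_one hc0.le hc1 (inv_pos.2 (by linarith))
    have hξmem : 2 - t ∈ Ioo (0:ℝ) 2 := ⟨by linarith, by linarith⟩
    have htpow : t ^ (α - 1) = (|B| + 1) / α := by
      rw [ht, ← Real.rpow_mul hc0.le]
      have h1α : (1:ℝ) - α ≠ 0 := by linarith
      have : (1 - α)⁻¹ * (α - 1) = -1 := by
        field_simp
        ring
      rw [this, Real.rpow_neg_one, hc, inv_div]
    have hd : deriv lam (2 - t) = -(α * t ^ (α - 1)) := by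
      rw [(lam_hasDerivAt hval (lam := lam) (2 - t) hξmem).deriv, Dfun_of_mem hξmem,
        sub_sub_cancel]
    have habs : |deriv lam (2 - t)| = |B| + 1 := by
      rw [hd, htpow, abs_neg, abs_of_nonneg (by positivity), mul_div_cancel₀ _ hα0.ne']
    have h1 : (1:ℝ) ≤ |2 - t| ^ (1 / r + 1) := by
      apply Real.one_le_rpow
      · rw [abs_of_nonneg (by linarith)]; linarith
      · positivity
    have hle := hB (2 - t) hξmem
    rw [habs] at hle
    nlinarith [le_abs_self B, mul_le_mul_of_nonneg_right h1 hB1.le]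
  -- Part 4 : dyadic condition holds
  · set E : ℝ → ℝ := fun ξ => Dfun α ξ - Dfun α (-ξ) with hE
    have hEInt : Integrable E volume := hInt.sub hInt.comp_neg
    have hae : deriv lam =ᵐ[volume] E := by
      have hS : ∀ᵐ ξ : ℝ, ξ ∉ ({-2, 0, 2} : Set ℝ) :=
        (Set.Finite.countable (s := ({-2, 0, 2} : Set ℝ)) (by simp)).ae_notMem volume
      filter_upwards [hS] with ξ hξ
      simp only [Set.mem_insert_iff, Set.mem_singleton_iff, not_or] at hξ
      obtain ⟨hn2, h0', h2'⟩ := hξ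
      rcases lt_trichotomy ξ 0 with hneg | hz | hpos
      · have hd := lam_deriv_neg heven ξ
        rcases lt_trichotomy ξ (-2) with hlt | heq | hgt
        · rw [hd, lam_deriv_zero hzero (by linarith : (2:ℝ) < -ξ)]
          have e1 : Dfun α ξ = 0 := Dfun_of_not_mem (by simp; intro h; linarith)
          have e2 : Dfun α (-ξ) = 0 := Dfun_of_not_mem (by simp; intro h; linarith)
          simp [hE, e1, e2]
        · exact absurd heq hn2
        · rw [hd, (lam_hasDerivAt hval (lam := lam) (-ξ) ⟨by linarith, by linarith⟩).deriv]
          have e1 : Dfun α ξ = 0 := Dfun_of_not_mem (by simp; intro h; linarith)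
          simp [hE, e1]
      · exact absurd hz h0'
      · rcases lt_trichotomy ξ 2 with hlt | heq | hgt
        · rw [(lam_hasDerivAt hval (lam := lam) ξ ⟨hpos, hlt⟩).deriv]
          have e2 : Dfun α (-ξ) = 0 := Dfun_of_not_mem (by simp; intro h; linarith)
          simp [hE, e2]
        · exact absurd heq h2'
        · rw [lam_deriv_zero hzero hgt]
          have e1 : Dfun α ξ = 0 := Dfun_of_not_mem (by simp; intro h; linarith)
          have e2 : Dfun α (-ξ) = 0 := Dfun_of_not_mem (by simp; intro h; linarith)
          simp [hE, e1, e2]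
    refine ⟨∫ x, |E x|, ?_⟩
    intro k
    have hre : ∫ ξ in DyadicAnnulus k, |deriv lam ξ| = ∫ ξ in DyadicAnnulus k, |E ξ| :=
      integral_congr_ae (ae_restrict_of_ae (hae.mono fun x hx => by simp only [hx]))
    rw [hre]
    rcases le_or_gt k 0 with hk | hk
    · have h2r : (2:ℝ) ^ ((k:ℝ) / r) ≤ 1 :=
        Real.rpow_le_one_of_one_le_of_nonpos one_le_two
          (div_nonpos_of_nonpos_of_nonneg (by exact_mod_cast hk) hr0.le)
      calc (2:ℝ) ^ ((k:ℝ) / r) * ∫ ξ in DyadicAnnulus k, |E ξ|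
          ≤ 1 * ∫ ξ in DyadicAnnulus k, |E ξ| :=
            mul_le_mul_of_nonneg_right h2r (integral_nonneg fun x => abs_nonneg _)
        _ = ∫ ξ in DyadicAnnulus k, |E ξ| := one_mul _
        _ ≤ ∫ x, |E x| := setIntegral_le_integral hEInt.abs
            (Eventually.of_forall fun x => abs_nonneg _)
    · have h2k : (2:ℝ) ≤ 2 ^ k := by
        calc (2:ℝ) = 2 ^ (1:ℤ) := (zpow_one 2).symm
          _ ≤ 2 ^ k := zpow_le_zpow_right₀ one_le_two hk
      have hzero' : ∀ ξ ∈ DyadicAnnulus k, |E ξ| = 0 := by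
        intro ξ hξ
        rcases hξ with h | h
        · have hξle : ξ ≤ -2 := h.2.trans (by linarith)
          have e1 : Dfun α ξ = 0 := Dfun_of_not_mem (by simp; intro h'; linarith)
          have e2 : Dfun α (-ξ) = 0 := Dfun_of_not_mem (by simp; intro h'; linarith)
          simp [hE, e1, e2]
        · have hξge : (2:ℝ) ≤ ξ := h2k.trans h.1
          have e1 : Dfun α ξ = 0 := Dfun_of_not_mem (by simp; intro h'; linarith)
          have e2 : Dfun α (-ξ) = 0 := Dfun_of_not_mem (by simp; intro h'; linarith)
          simp [hE, e1, e2]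
      rw [setIntegral_eq_zero_of_forall_eq_zero hzero', mul_zero]
      exact integral_nonneg fun x => abs_nonneg _
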